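/- Let L be an embedded polygonal arc in ℝ³ with vertices p₀, …, p_n (n ≥ 1), edges eᵢ = [p_{i−1}, pᵢ], and edge lines ℓᵢ (the 1-dimensional affine subspace through p_{i−1} and pᵢ). Let u be a unit vector such that: (a) for every i, pᵢ − p_{i−1} does not lie in the span of u; (b) for every vertex v of L and every edge line ℓⱼ with v ∉ ℓⱼ, u does not lie in the direction space of the affine span of {v} ∪ ℓⱼ; (c) for any two distinct edge lines ℓᵢ, ℓⱼ that are coplanar (i.e., contained in a common 2-dimensional affine subspace), u does not lie in the direction space of that 2-dimensional affine subspace; (d) no line with direction u meets L in three distinct points. Then the orthogonal projection π_u restricted to L satisfies: π_u is injective on each edge eᵢ; every point of the plane has at most two preimages in L; whenever x ≠ y are points of L with π_u x = π_u y, then x and y are not vertices of L and lie on two distinct edges; and the set of points of the plane having exactly two preimages in L is finite. (First part of Lemma 2.1: for u outside the trace set, the projection image of L is an arc diagram.) -/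

import Mathlib

open Module Set

local notation "E3" => EuclideanSpace ℝ (Fin 3)

/-- The orthogonal projection of ℝ³ onto the orthogonal complement of the span of `u`. -/
noncomputable def projAlong (u : E3) : E3 →L[ℝ] ↥((ℝ ∙ u)ᗮ) :=
  Submodule.orthogonalProjectionOnto ((ℝ ∙ u)ᗮ)

lemma projAlong_eq_iff (u x y : E3) :
    projAlong u x = projAlong u y ↔ x - y ∈ (ℝ ∙ u : Submodule ℝ E3) := by
  rw [← sub_eq_zero, ← map_sub, projAlong, Submodule.orthogonalProjectionOnto_eq_zero_iff,
    Submodule.orthogonal_orthogonal]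

lemma mem_of_span_aux (W : Submodule ℝ E3) (d v : E3) (hv : v ≠ 0)
    (h1 : v ∈ (ℝ ∙ d : Submodule ℝ E3)) (h2 : v ∈ W) : d ∈ W := by
  obtain ⟨c, rfl⟩ := Submodule.mem_span_singleton.1 h1
  have hc : c ≠ 0 := fun h => hv (by simp [h])
  have := W.smul_mem c⁻¹ h2
  rwa [smul_smul, inv_mul_cancel₀ hc, one_smul] at this

section Main
variable (n : ℕ) (p : Fin (n + 1) → E3)

lemma seg_sub_span (i : Fin n) :
    segment ℝ (p i.castSucc) (p i.succ) ⊆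
      (affineSpan ℝ {p i.castSucc, p i.succ} : Set E3) := by
  rw [← convexHull_pair]
  exact convexHull_subset_affineSpan _

lemma sub_mem_dir {i : Fin n} {x y : E3}
    (hx : x ∈ affineSpan ℝ {p i.castSucc, p i.succ})
    (hy : y ∈ affineSpan ℝ {p i.castSucc, p i.succ}) :
    x - y ∈ (ℝ ∙ (p i.castSucc - p i.succ) : Submodule ℝ E3) := by
  have := AffineSubspace.vsub_mem_direction hx hy
  rwa [direction_affineSpan, vectorSpan_pair, vsub_eq_sub, vsub_eq_sub] at this

end Main

/-- **First part of Lemma 2.1.** If the unit vector `u` avoids the trace set of the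
embedded polygonal arc `L` (conditions (a)–(d)), then the projection `π_u` maps `L` to an
arc diagram: it is injective on each edge, every point of the plane has at most two
preimages in `L`, double points are non-vertex points lying on two distinct edges, and
there are only finitely many double points. -/
theorem arc_diagram_of_trace_set_complement
    (n : ℕ) (hn : 1 ≤ n) (p : Fin (n + 1) → E3)
    (hpe : ∀ i : Fin n, p i.castSucc ≠ p i.succ)
    (hemb : ∀ i j : Fin n, (i : ℕ) < (j : ℕ) →
      (((j : ℕ) = (i : ℕ) + 1 →
          segment ℝ (p i.castSucc) (p i.succ) ∩ segment ℝ (p j.castSucc) (p j.succ)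
            = {p i.succ}) ∧
        ((j : ℕ) ≠ (i : ℕ) + 1 →
          segment ℝ (p i.castSucc) (p i.succ) ∩ segment ℝ (p j.castSucc) (p j.succ)
            = ∅)))
    (u : E3) (hu : ‖u‖ = 1)
    -- (a) `u` is not parallel to any edge
    (ha : ∀ i : Fin n, p i.succ - p i.castSucc ∉ (ℝ ∙ u : Submodule ℝ E3))
    -- (b) for a vertex `v` and an edge line `ℓ j` not containing `v`, `u` is not in the
    -- direction of the plane determined by `v` and `ℓ j`
    (hb : ∀ v : E3, v ∈ Set.range p → ∀ j : Fin n,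
      v ∉ affineSpan ℝ {p j.castSucc, p j.succ} →
      u ∉ (affineSpan ℝ
        ({v} ∪ (affineSpan ℝ {p j.castSucc, p j.succ} : Set E3))).direction)
    -- (c) for two distinct coplanar edge lines, `u` is not in the direction of the plane
    -- containing them
    (hc : ∀ i j : Fin n,
      affineSpan ℝ {p i.castSucc, p i.succ} ≠ affineSpan ℝ {p j.castSucc, p j.succ} →
      ∀ Q : AffineSubspace ℝ E3, finrank ℝ Q.direction = 2 →
        affineSpan ℝ {p i.castSucc, p i.succ} ≤ Q →
        affineSpan ℝ {p j.castSucc, p j.succ} ≤ Q →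
        u ∉ Q.direction)
    -- (d) no line with direction `u` meets `L` in three distinct points
    (hd : ¬ ∃ x y z : E3,
      x ∈ (⋃ i : Fin n, segment ℝ (p i.castSucc) (p i.succ)) ∧
      y ∈ (⋃ i : Fin n, segment ℝ (p i.castSucc) (p i.succ)) ∧
      z ∈ (⋃ i : Fin n, segment ℝ (p i.castSucc) (p i.succ)) ∧
      x ≠ y ∧ x ≠ z ∧ y ≠ z ∧
      y - x ∈ (ℝ ∙ u : Submodule ℝ E3) ∧ z - x ∈ (ℝ ∙ u : Submodule ℝ E3)) :
    (∀ i : Fin n, Set.InjOn (projAlong u) (segment ℝ (p i.castSucc) (p i.succ))) ∧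
    (∀ q : ↥((ℝ ∙ u)ᗮ),
      Set.encard {x ∈ ⋃ i : Fin n, segment ℝ (p i.castSucc) (p i.succ) |
        projAlong u x = q} ≤ 2) ∧
    (∀ x y : E3,
      x ∈ (⋃ i : Fin n, segment ℝ (p i.castSucc) (p i.succ)) →
      y ∈ (⋃ i : Fin n, segment ℝ (p i.castSucc) (p i.succ)) →
      x ≠ y → projAlong u x = projAlong u y →
        x ∉ Set.range p ∧ y ∉ Set.range p ∧
        ∃ i j : Fin n, i ≠ j ∧
          x ∈ segment ℝ (p i.castSucc) (p i.succ) ∧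
          y ∈ segment ℝ (p j.castSucc) (p j.succ)) ∧
    {q : ↥((ℝ ∙ u)ᗮ) |
      Set.encard {x ∈ ⋃ i : Fin n, segment ℝ (p i.castSucc) (p i.succ) |
        projAlong u x = q} = 2}.Finite := by
  have hu0 : u ≠ 0 := fun h => by simp [h] at hu
  -- (a) restated for reversed difference
  have ha' : ∀ i : Fin n, p i.castSucc - p i.succ ∉ (ℝ ∙ u : Submodule ℝ E3) := by
    intro i h
    exact ha i (by simpa using Submodule.neg_mem _ h)
  -- Part 1
  have inj : ∀ i : Fin n, Set.InjOn (projAlong u) (segment ℝ (p i.castSucc) (p i.succ)) := by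
    intro i x hx y hy hxy
    by_contra hne
    have hxs := seg_sub_span n p i hx
    have hys := seg_sub_span n p i hy
    have h1 : x - y ∈ (ℝ ∙ (p i.castSucc - p i.succ) : Submodule ℝ E3) :=
      sub_mem_dir n p hxs hys
    have h2 : x - y ∈ (ℝ ∙ u : Submodule ℝ E3) := (projAlong_eq_iff u x y).1 hxy
    exact ha' i (mem_of_span_aux _ _ _ (sub_ne_zero.2 hne) h1 h2)
  have part3 : ∀ x y : E3,
      x ∈ (⋃ i : Fin n, segment ℝ (p i.castSucc) (p i.succ)) →
      y ∈ (⋃ i : Fin n, segment ℝ (p i.castSucc) (p i.succ)) →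
      x ≠ y → projAlong u x = projAlong u y →
        x ∉ Set.range p ∧ y ∉ Set.range p ∧
        ∃ i j : Fin n, i ≠ j ∧
          x ∈ segment ℝ (p i.castSucc) (p i.succ) ∧
          y ∈ segment ℝ (p j.castSucc) (p j.succ) := by
    intro x y hx hy hne heq
    obtain ⟨i, hxi⟩ := Set.mem_iUnion.1 hx
    obtain ⟨j, hyj⟩ := Set.mem_iUnion.1 hy
    have hij : i ≠ j := by
      rintro rfl
      exact hne (inj i hxi hyj heq)
    have claim : ∀ z w : E3, z ∈ Set.range p → (∀ k : Fin n,
        w ∈ segment ℝ (p k.castSucc) (p k.succ) → z ≠ w →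
        w - z ∈ (ℝ ∙ u : Submodule ℝ E3) → False) := by
      intro z w hz k hwk hzw hwu
      by_cases hzl : z ∈ affineSpan ℝ {p k.castSucc, p k.succ}
      · have h1 : w - z ∈ (ℝ ∙ (p k.castSucc - p k.succ) : Submodule ℝ E3) :=
          sub_mem_dir n p (seg_sub_span n p k hwk) hzl
        exact ha' k (mem_of_span_aux _ _ _ (sub_ne_zero.2 (Ne.symm hzw)) h1 hwu)
      · apply hb z hz k hzl
        have hzm : z ∈ affineSpan ℝ
            ({z} ∪ (affineSpan ℝ {p k.castSucc, p k.succ} : Set E3)) :=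
          subset_affineSpan ℝ _ (Or.inl rfl)
        have hwm : w ∈ affineSpan ℝ
            ({z} ∪ (affineSpan ℝ {p k.castSucc, p k.succ} : Set E3)) :=
          subset_affineSpan ℝ _ (Or.inr (seg_sub_span n p k hwk))
        have hdir : w - z ∈ (affineSpan ℝ
            ({z} ∪ (affineSpan ℝ {p k.castSucc, p k.succ} : Set E3))).direction := by
          have := AffineSubspace.vsub_mem_direction hwm hzm
          rwa [vsub_eq_sub] at this
        exact mem_of_span_aux _ _ _ (sub_ne_zero.2 (Ne.symm hzw)) hwu hdir
    have hxy : x - y ∈ (ℝ ∙ u : Submodule ℝ E3) := (projAlong_eq_iff u x y).1 heq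
    have hyx : y - x ∈ (ℝ ∙ u : Submodule ℝ E3) := by
      simpa using Submodule.neg_mem _ hxy
    refine ⟨fun hxr => claim x y hxr j hyj hne hyx,
      fun hyr => claim y x hyr i hxi (Ne.symm hne) hxy, i, j, hij, hxi, hyj⟩
  refine ⟨inj, ?_, part3, ?_⟩
  · -- Part 2
    intro q
    set F := {x ∈ ⋃ i : Fin n, segment ℝ (p i.castSucc) (p i.succ) | projAlong u x = q}
      with hF
    by_cases h : ∃ a b, a ∈ F ∧ b ∈ F ∧ a ≠ b
    · obtain ⟨a, b, haF, hbF, hab⟩ := h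
      have hsub : F ⊆ {a, b} := by
        intro c hcF
        by_contra hcn
        rw [Set.mem_insert_iff, Set.mem_singleton_iff] at hcn
        push_neg at hcn
        refine hd ⟨a, b, c, haF.1, hbF.1, hcF.1, hab, Ne.symm hcn.1, Ne.symm hcn.2, ?_, ?_⟩
        · have := (projAlong_eq_iff u b a).1 (hbF.2.trans haF.2.symm)
          exact this
        · exact (projAlong_eq_iff u c a).1 (hcF.2.trans haF.2.symm)
      calc F.encard ≤ ({a, b} : Set E3).encard := Set.encard_le_encard hsub
        _ = 2 := Set.encard_pair hab
    · push_neg at h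
      have : F.Subsingleton := fun a haF b hbF => by
        by_contra hne; exact hne (h a b haF hbF)
      exact le_trans (Set.encard_le_one_iff.2 fun a b haF hbF => h a b haF hbF) (by norm_num)
  · -- Part 4
    set T : Fin n → Fin n → Set ↥((ℝ ∙ u)ᗮ) := fun i j =>
      {q | ∃ x y : E3, x ∈ segment ℝ (p i.castSucc) (p i.succ) ∧
        y ∈ segment ℝ (p j.castSucc) (p j.succ) ∧ x ≠ y ∧
        projAlong u x = q ∧ projAlong u y = q} with hT
    have hTsub : ∀ i j, (T i j).Subsingleton := by
      intro i j q₁ hq₁ q₂ hq₂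
      by_contra hqne
      obtain ⟨x₁, y₁, hx₁, hy₁, hne₁, hpx₁, hpy₁⟩ := hq₁
      obtain ⟨x₂, y₂, hx₂, hy₂, hne₂, hpx₂, hpy₂⟩ := hq₂
      have hx₁l := seg_sub_span n p i hx₁
      have hx₂l := seg_sub_span n p i hx₂
      have hy₁l := seg_sub_span n p j hy₁
      have hy₂l := seg_sub_span n p j hy₂
      have hxy₁ : x₁ - y₁ ∈ (ℝ ∙ u : Submodule ℝ E3) :=
        (projAlong_eq_iff u x₁ y₁).1 (hpx₁.trans hpy₁.symm)
      have hxy₂ : x₂ - y₂ ∈ (ℝ ∙ u : Submodule ℝ E3) :=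
        (projAlong_eq_iff u x₂ y₂).1 (hpx₂.trans hpy₂.symm)
      -- the two lines are distinct
      have hlne : affineSpan ℝ {p i.castSucc, p i.succ} ≠
          affineSpan ℝ {p j.castSucc, p j.succ} := by
        intro hEq
        have h1 : x₁ - y₁ ∈ (ℝ ∙ (p i.castSucc - p i.succ) : Submodule ℝ E3) :=
          sub_mem_dir n p hx₁l (hEq ▸ hy₁l)
        exact ha' i (mem_of_span_aux _ _ _ (sub_ne_zero.2 hne₁) h1 hxy₁)
      set d : E3 := p i.succ - p i.castSucc with hdd
      set V : Submodule ℝ E3 := Submodule.span ℝ (Set.range ![u, d]) with hV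
      have hrange : Set.range ![u, d] = {u, d} := by
        simp [Matrix.range_cons, Matrix.range_empty, Set.pair_comm]
      have huV : u ∈ V := Submodule.subset_span (by rw [hrange]; exact Or.inl rfl)
      have hdV : d ∈ V := Submodule.subset_span (by rw [hrange]; exact Or.inr rfl)
      have hli : LinearIndependent ℝ ![u, d] := by
        rw [LinearIndependent.pair_iff' hu0]
        intro a haa
        apply ha i
        rw [hdd] at haa
        rw [← haa]
        exact Submodule.smul_mem _ a (Submodule.mem_span_singleton_self u)
      have hrank : finrank ℝ V = 2 := by
        rw [hV, finrank_span_eq_card hli]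
        simp
      set Q : AffineSubspace ℝ E3 := AffineSubspace.mk' x₁ V with hQ
      have memQ : ∀ w : E3, w - x₁ ∈ V → w ∈ Q := by
        intro w hw
        rw [hQ, AffineSubspace.mem_mk', vsub_eq_sub]
        exact hw
      have hspanle : ∀ v : E3, v ∈ V → (ℝ ∙ v : Submodule ℝ E3) ≤ V := fun v hv =>
        (Submodule.span_singleton_le_iff_mem v V).2 hv
      have hdile : (ℝ ∙ (p i.castSucc - p i.succ) : Submodule ℝ E3) ≤ V := by
        apply hspanle
        have : p i.castSucc - p i.succ = -d := by rw [hdd]; abel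
        rw [this]; exact V.neg_mem hdV
      have hsule : (ℝ ∙ u : Submodule ℝ E3) ≤ V := hspanle u huV
      -- memberships
      have hx₂Q : x₂ - x₁ ∈ V := hdile (sub_mem_dir n p hx₂l hx₁l)
      have hy₁Q : y₁ - x₁ ∈ V := by
        have : y₁ - x₁ = -(x₁ - y₁) := by abel
        rw [this]; exact V.neg_mem (hsule hxy₁)
      have hy₂Q : y₂ - x₁ ∈ V := by
        have : y₂ - x₁ = -(x₂ - y₂) + (x₂ - x₁) := by abel
        rw [this]; exact V.add_mem (V.neg_mem (hsule hxy₂)) hx₂Q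
      have hy12 : y₁ ≠ y₂ := by
        intro hEq
        exact hqne (hpy₁.symm.trans (hEq ▸ hpy₂))
      have hyV : y₂ - y₁ ∈ V := by
        have : y₂ - y₁ = (y₂ - x₁) - (y₁ - x₁) := by abel
        rw [this]; exact V.sub_mem hy₂Q hy₁Q
      have hdj : p j.castSucc - p j.succ ∈ V := by
        refine mem_of_span_aux V _ (y₂ - y₁) (sub_ne_zero.2 (Ne.symm hy12)) ?_ hyV
        exact sub_mem_dir n p hy₂l hy₁l
      have hdjle : (ℝ ∙ (p j.castSucc - p j.succ) : Submodule ℝ E3) ≤ V := hspanle _ hdj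
      have hjc : p j.castSucc ∈ Q := by
        apply memQ
        have : p j.castSucc - x₁ = (p j.castSucc - y₁) + (y₁ - x₁) := by abel
        rw [this]
        exact V.add_mem (hdjle (sub_mem_dir n p (subset_affineSpan ℝ _ (Or.inl rfl)) hy₁l))
          hy₁Q
      have hjs : p j.succ ∈ Q := by
        apply memQ
        have : p j.succ - x₁ = (p j.succ - y₁) + (y₁ - x₁) := by abel
        rw [this]
        exact V.add_mem
          (hdjle (sub_mem_dir n p (subset_affineSpan ℝ _ (Or.inr rfl)) hy₁l)) hy₁Q
      have hic : p i.castSucc ∈ Q := by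
        apply memQ
        exact hdile (sub_mem_dir n p (subset_affineSpan ℝ _ (Or.inl rfl)) hx₁l)
      have his : p i.succ ∈ Q := by
        apply memQ
        exact hdile (sub_mem_dir n p (subset_affineSpan ℝ _ (Or.inr rfl)) hx₁l)
      have hiQ : affineSpan ℝ {p i.castSucc, p i.succ} ≤ Q := by
        rw [affineSpan_le]
        rintro z (rfl | rfl)
        exacts [hic, his]
      have hjQ : affineSpan ℝ {p j.castSucc, p j.succ} ≤ Q := by
        rw [affineSpan_le]
        rintro z (rfl | rfl)
        exacts [hjc, hjs]
      have hdirQ : finrank ℝ Q.direction = 2 := by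
        rw [hQ, AffineSubspace.direction_mk']; exact hrank
      refine hc i j hlne Q hdirQ hiQ hjQ ?_
      rw [hQ, AffineSubspace.direction_mk']
      exact huV
    apply Set.Finite.subset
      (Set.finite_iUnion fun i : Fin n => Set.finite_iUnion fun j : Fin n =>
        (hTsub i j).finite)
    intro q hq
    have h2 : 1 < Set.encard {x ∈ ⋃ i : Fin n, segment ℝ (p i.castSucc) (p i.succ) |
        projAlong u x = q} := by
      rw [hq]; norm_num
    obtain ⟨a, b, haF, hbF, hab⟩ := Set.one_lt_encard_iff.1 h2
    obtain ⟨-, -, i, j, hij, hai, hbj⟩ := part3 a b haF.1 hbF.1 hab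
      (haF.2.trans hbF.2.symm)
    exact Set.mem_iUnion.2 ⟨i, Set.mem_iUnion.2 ⟨j,
      ⟨a, b, hai, hbj, hab, haF.2, hbF.2⟩⟩⟩
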